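/- Let θ ∈ (0,1) and y* = (1−θ, θ)ᵀ. Let g : ℝ²_{>0} → ℝ²_{>0} be twice continuously differentiable with g(c·y*) = c·y* for all c > 0 and g₁(y) + g₂(y) = y₁ + y₂ for all y ∈ ℝ²_{>0}, and let R = tr(Dg(y*)) − 1. If R < 0, then there exists δ > 0 such that for every ε ∈ (0,1) with 0 < |ε − θ| < δ, the point y¹ := g((1−ε, ε)ᵀ) satisfies (y¹₂ − θ)·(ε − θ) < 0; that is, after one step the second component lands strictly on the opposite side of the steady-state value θ, so the method overshoots the steady state. -/

import Mathlib

open Topology Filter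


/-- Under the hypotheses of the main theorem, if the stability value
`R = tr Dg(y*) − 1` is negative, then for all initial states `(1−ε, ε)ᵀ`
sufficiently close to (but different from) the steady state `y* = (1−θ, θ)ᵀ`, the
second component of `y¹ = g((1−ε, ε)ᵀ)` lands strictly on the opposite side of θ,
i.e. the method overshoots the steady state. -/
theorem overshoot_of_neg_stability_function
    (θ : ℝ) (hθ : θ ∈ Set.Ioo (0 : ℝ) 1)
    (g : (Fin 2 → ℝ) → (Fin 2 → ℝ))
    (hmap : ∀ y : Fin 2 → ℝ, 0 < y 0 → 0 < y 1 → 0 < g y 0 ∧ 0 < g y 1)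
    (hsmooth : ContDiffOn ℝ 2 g {y : Fin 2 → ℝ | 0 < y 0 ∧ 0 < y 1})
    (hfix : ∀ c : ℝ, 0 < c → g (c • ![1 - θ, θ]) = c • ![1 - θ, θ])
    (hcons : ∀ y : Fin 2 → ℝ, 0 < y 0 → 0 < y 1 → g y 0 + g y 1 = y 0 + y 1)
    (R : ℝ)
    (hR : R = (Matrix.of fun i j =>
      fderiv ℝ g ![1 - θ, θ] (Pi.single j 1) i : Matrix (Fin 2) (Fin 2) ℝ).trace - 1)
    (hRneg : R < 0) :
    ∃ δ > 0, ∀ ε : ℝ, 0 < ε → ε < 1 → 0 < |ε - θ| → |ε - θ| < δ →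
      (g ![1 - ε, ε] 1 - θ) * (ε - θ) < 0 := by
  obtain ⟨hθ0, hθ1⟩ := hθ
  set S : Set (Fin 2 → ℝ) := {y : Fin 2 → ℝ | 0 < y 0 ∧ 0 < y 1} with hS
  have hopen : IsOpen S := by
    have h : S = {y : Fin 2 → ℝ | 0 < y 0} ∩ {y | 0 < y 1} := rfl
    rw [h]
    exact (isOpen_lt continuous_const (continuous_apply 0)).inter
      (isOpen_lt continuous_const (continuous_apply 1))
  have hmem : (![1 - θ, θ] : Fin 2 → ℝ) ∈ S :=
    ⟨by simpa using sub_pos.mpr hθ1, by simpa using hθ0⟩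
  have hnhds : S ∈ 𝓝 (![1 - θ, θ] : Fin 2 → ℝ) := hopen.mem_nhds hmem
  have hdiff : DifferentiableAt ℝ g ![1 - θ, θ] :=
    (hsmooth.contDiffAt hnhds).differentiableAt (by norm_num)
  set D := fderiv ℝ g ![1 - θ, θ] with hDdef
  have hD : HasFDerivAt g D ![1 - θ, θ] := hdiff.hasFDerivAt
  -- the conservation law for the derivative
  have hconsD : ∀ e : Fin 2 → ℝ, D e 0 + D e 1 = e 0 + e 1 := by
    have p0 := (ContinuousLinearMap.proj 0 : (Fin 2 → ℝ) →L[ℝ] ℝ)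
    intro e
    have h0 : HasFDerivAt (fun y => g y 0)
        ((ContinuousLinearMap.proj 0 : (Fin 2 → ℝ) →L[ℝ] ℝ).comp D) ![1 - θ, θ] :=
      (ContinuousLinearMap.proj 0 : (Fin 2 → ℝ) →L[ℝ] ℝ).hasFDerivAt.comp _ hD
    have h1 : HasFDerivAt (fun y => g y 1)
        ((ContinuousLinearMap.proj 1 : (Fin 2 → ℝ) →L[ℝ] ℝ).comp D) ![1 - θ, θ] :=
      (ContinuousLinearMap.proj 1 : (Fin 2 → ℝ) →L[ℝ] ℝ).hasFDerivAt.comp _ hD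
    have hs : HasFDerivAt (fun y => g y 0 + g y 1)
        ((ContinuousLinearMap.proj 0 : (Fin 2 → ℝ) →L[ℝ] ℝ).comp D +
         (ContinuousLinearMap.proj 1 : (Fin 2 → ℝ) →L[ℝ] ℝ).comp D) ![1 - θ, θ] :=
      h0.add h1
    have heq : (fun y : Fin 2 → ℝ => y 0 + y 1) =ᶠ[𝓝 (![1 - θ, θ] : Fin 2 → ℝ)]
        (fun y => g y 0 + g y 1) := by
      filter_upwards [hnhds] with y hy
      exact (hcons y hy.1 hy.2).symm
    have hs' := hs.congr_of_eventuallyEq heq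
    have hlin : HasFDerivAt (fun y : Fin 2 → ℝ => y 0 + y 1)
        ((ContinuousLinearMap.proj 0 : (Fin 2 → ℝ) →L[ℝ] ℝ) +
         (ContinuousLinearMap.proj 1 : (Fin 2 → ℝ) →L[ℝ] ℝ)) ![1 - θ, θ] :=
      (ContinuousLinearMap.proj 0 : (Fin 2 → ℝ) →L[ℝ] ℝ).hasFDerivAt.add
        (ContinuousLinearMap.proj 1 : (Fin 2 → ℝ) →L[ℝ] ℝ).hasFDerivAt
    have huniq := hs'.unique hlin
    have he := ContinuousLinearMap.ext_iff.mp huniq e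
    simpa using he
  -- the derivative of the parametrized curve
  have hc : HasDerivAt (fun ε : ℝ => (![1 - ε, ε] : Fin 2 → ℝ)) ![-1, 1] θ := by
    apply hasDerivAt_pi.mpr
    intro i
    fin_cases i
    · simpa using (hasDerivAt_id θ).const_sub 1
    · simpa using hasDerivAt_id' θ
  have hgc : HasDerivAt (fun ε : ℝ => g ![1 - ε, ε]) (D ![-1, 1]) θ :=
    hD.comp_hasDerivAt θ hc
  have hφ : HasDerivAt (fun ε : ℝ => g ![1 - ε, ε] 1) (D ![-1, 1] 1) θ :=
    hasDerivAt_pi.mp hgc 1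
  -- identify the derivative with R
  have hv : (![-1, 1] : Fin 2 → ℝ) = Pi.single 1 1 - Pi.single 0 1 := by
    funext i; fin_cases i <;> simp
  have hDv : D ![-1, 1] 1 = R := by
    have h1 := hconsD (Pi.single 0 1)
    simp only [Pi.single_eq_same, Pi.single_eq_of_ne (by decide : (1 : Fin 2) ≠ 0)] at h1
    rw [hv, map_sub]
    rw [hR]
    simp only [Matrix.trace, Matrix.diag, Fin.sum_univ_two, Matrix.of_apply]
    simp only [Pi.sub_apply]
    linarith
  rw [hDv] at hφ
  have hφθ : g ![1 - θ, θ] 1 = θ := by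
    have h := hfix 1 one_pos
    rw [one_smul] at h
    rw [h]; simp
  -- the slope is eventually negative
  have hslope := hasDerivAt_iff_tendsto_slope.mp hφ
  have hev : ∀ᶠ x in 𝓝[≠] θ, slope (fun ε : ℝ => g ![1 - ε, ε] 1) θ x < 0 :=
    hslope.eventually_lt_const hRneg
  rw [eventually_nhdsWithin_iff, Metric.eventually_nhds_iff] at hev
  obtain ⟨δ, hδ, hδ'⟩ := hev
  refine ⟨δ, hδ, fun ε hε0 hε1 hne hlt => ?_⟩
  have hεθ : ε ≠ θ := by
    intro h; rw [h] at hne; simp at hne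
  have hsneg := hδ' (y := ε) (by rwa [Real.dist_eq]) (by simpa using hεθ)
  have hmul : slope (fun ε : ℝ => g ![1 - ε, ε] 1) θ ε * (ε - θ) = g ![1 - ε, ε] 1 - θ := by
    rw [slope_def_field, div_mul_cancel₀ _ (sub_ne_zero.mpr hεθ), hφθ]
  have hsub : ε - θ ≠ 0 := sub_ne_zero.mpr hεθ
  have hsq : 0 < (ε - θ) ^ 2 := by positivity
  calc (g ![1 - ε, ε] 1 - θ) * (ε - θ)
      = slope (fun ε : ℝ => g ![1 - ε, ε] 1) θ ε * (ε - θ) ^ 2 := by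
        rw [← hmul]; ring
    _ < 0 := mul_neg_of_neg_of_pos hsneg hsq
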